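/- arXiv:2401.02155 — 6 statements merged into one kernel-verified Lean document; each statement's English description precedes it below -/
import Mathlib

section
/- Let Δ be a positive integer and let G be a graph with maximum degree at most Δ. Let L = {v ∈ V(G) : deg_G(v) ≤ Δ^{1/3}}. Then there is a proper colouring f of the induced subgraph G[L] using at most 2·Δ^{1/3} + 1 colours such that for every vertex v of G with N(v) ∩ L ≠ ∅ there exists w ∈ N(v) ∩ L whose colour f(w) is different from the colour of every other vertex of N(v) ∩ L. -/
open Finset

lemma key (t : ℕ) {V : Type} [Fintype V] [DecidableEq V] (G : SimpleGraph V)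
    [DecidableRel G.Adj] (L : Finset V) (hdeg : ∀ v ∈ L, G.degree v ≤ t) :
    ∀ S : Finset V, S ⊆ L →
      ∃ f : V → ℕ,
        (∀ v ∈ S, f v < 2 * t + 1) ∧
        (∀ u ∈ S, ∀ v ∈ S, G.Adj u v → f u ≠ f v) ∧
        (∀ v : V, (G.neighborFinset v ∩ S).Nonempty →
          ∃ w ∈ G.neighborFinset v ∩ S,
            ∀ u ∈ G.neighborFinset v ∩ S, u ≠ w → f u ≠ f w) := by
  intro S
  induction S using Finset.induction_on with
  | empty =>
    intro _
    exact ⟨fun _ => 0, by simp, by simp, by simp⟩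
  | @insert a S ha ih =>
    intro hsub
    obtain ⟨f, hf1, hf2, hf3⟩ := ih (fun x hx => hsub (mem_insert_of_mem hx))
    have haL : a ∈ L := hsub (mem_insert_self a S)
    have hta : G.degree a ≤ t := hdeg a haL
    classical
    set W : V → V := fun v =>
      if h : (G.neighborFinset v ∩ S).Nonempty then (hf3 v h).choose else v with hW
    have hWmem : ∀ v, (G.neighborFinset v ∩ S).Nonempty →
        W v ∈ G.neighborFinset v ∩ S := by
      intro v h
      simp only [hW, dif_pos h]
      exact (hf3 v h).choose_spec.1
    have hWuniq : ∀ v, (G.neighborFinset v ∩ S).Nonempty →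
        ∀ u ∈ G.neighborFinset v ∩ S, u ≠ W v → f u ≠ f (W v) := by
      intro v h
      simp only [hW, dif_pos h]
      exact (hf3 v h).choose_spec.2
    set Forb : Finset ℕ :=
      ((G.neighborFinset a ∩ S).image f) ∪
        (((G.neighborFinset a).filter
          (fun v => (G.neighborFinset v ∩ S).Nonempty)).image (fun v => f (W v)))
      with hForb
    have hForbcard : Forb.card ≤ 2 * t := by
      have h1 : ((G.neighborFinset a ∩ S).image f).card ≤ t := by
        calc ((G.neighborFinset a ∩ S).image f).card ≤ (G.neighborFinset a ∩ S).card :=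
              card_image_le
          _ ≤ (G.neighborFinset a).card := card_le_card inter_subset_left
          _ ≤ t := by rwa [G.card_neighborFinset_eq_degree]
      have h2 : (((G.neighborFinset a).filter
          (fun v => (G.neighborFinset v ∩ S).Nonempty)).image (fun v => f (W v))).card ≤ t := by
        calc _ ≤ ((G.neighborFinset a).filter
              (fun v => (G.neighborFinset v ∩ S).Nonempty)).card := card_image_le
          _ ≤ (G.neighborFinset a).card := card_filter_le _ _
          _ ≤ t := by rwa [G.card_neighborFinset_eq_degree]
      calc Forb.card ≤ _ + _ := card_union_le _ _
        _ ≤ t + t := Nat.add_le_add h1 h2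
        _ = 2 * t := (two_mul t).symm
    have hc : ∃ c ∈ Finset.range (2 * t + 1), c ∉ Forb := by
      by_contra hcon
      push_neg at hcon
      have : Finset.range (2 * t + 1) ⊆ Forb := fun x hx => hcon x hx
      have := card_le_card this
      rw [card_range] at this
      omega
    obtain ⟨c, hcrange, hcForb⟩ := hc
    have hcf : ∀ u ∈ G.neighborFinset a ∩ S, c ≠ f u := by
      intro u hu hceq
      exact hcForb (mem_union_left _ (mem_image.2 ⟨u, hu, hceq.symm⟩))
    have hcW : ∀ v ∈ G.neighborFinset a, (G.neighborFinset v ∩ S).Nonempty →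
        c ≠ f (W v) := by
      intro v hv hne hceq
      exact hcForb (mem_union_right _
        (mem_image.2 ⟨v, mem_filter.2 ⟨hv, hne⟩, hceq.symm⟩))
    refine ⟨Function.update f a c, ?_, ?_, ?_⟩
    · intro v hv
      rcases mem_insert.1 hv with rfl | hv
      · rw [Function.update_self]; exact mem_range.1 hcrange
      · rw [Function.update_of_ne (ne_of_mem_of_not_mem hv ha)]
        exact hf1 v hv
    · intro u hu v hv hadj
      rcases mem_insert.1 hu with rfl | hu'
      · rcases mem_insert.1 hv with rfl | hv'
        · exact absurd hadj (G.irrefl)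
        · rw [Function.update_self, Function.update_of_ne (ne_of_mem_of_not_mem hv' ha)]
          exact hcf v (mem_inter.2 ⟨(G.mem_neighborFinset _ _).2 hadj, hv'⟩)
      · rcases mem_insert.1 hv with rfl | hv'
        · rw [Function.update_self, Function.update_of_ne (ne_of_mem_of_not_mem hu' ha)]
          exact fun h => hcf u
            (mem_inter.2 ⟨(G.mem_neighborFinset _ _).2 hadj.symm, hu'⟩) h.symm
        · rw [Function.update_of_ne (ne_of_mem_of_not_mem hu' ha),
            Function.update_of_ne (ne_of_mem_of_not_mem hv' ha)]
          exact hf2 u hu' v hv' hadj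
    · intro v hv
      by_cases hav : a ∈ G.neighborFinset v
      · by_cases hS : (G.neighborFinset v ∩ S).Nonempty
        · refine ⟨W v, ?_, ?_⟩
          · have := hWmem v hS
            rw [mem_inter] at this ⊢
            exact ⟨this.1, mem_insert_of_mem this.2⟩
          · intro u hu hune
            have hWS : W v ∈ S := (mem_inter.1 (hWmem v hS)).2
            have hWa : W v ≠ a := fun h => ha (h ▸ hWS)
            rw [Function.update_of_ne hWa]
            rcases mem_inter.1 hu with ⟨hu1, hu2⟩
            rcases mem_insert.1 hu2 with rfl | hu2
            · rw [Function.update_self]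
              exact hcW v ((G.mem_neighborFinset _ _).2
                ((G.mem_neighborFinset _ _).1 hav).symm) hS
            · rw [Function.update_of_ne (ne_of_mem_of_not_mem hu2 ha)]
              exact hWuniq v hS u (mem_inter.2 ⟨hu1, hu2⟩) hune
        · refine ⟨a, mem_inter.2 ⟨hav, mem_insert_self a S⟩, ?_⟩
          intro u hu hune
          rcases mem_inter.1 hu with ⟨hu1, hu2⟩
          rcases mem_insert.1 hu2 with rfl | hu2
          · exact absurd rfl hune
          · exact absurd ⟨u, mem_inter.2 ⟨hu1, hu2⟩⟩ hS
      · have heq : G.neighborFinset v ∩ insert a S = G.neighborFinset v ∩ S := by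
          ext x
          simp only [mem_inter, mem_insert]
          constructor
          · rintro ⟨hx1, rfl | hx2⟩
            · exact absurd hx1 hav
            · exact ⟨hx1, hx2⟩
          · rintro ⟨hx1, hx2⟩
            exact ⟨hx1, Or.inr hx2⟩
        rw [heq] at hv ⊢
        obtain ⟨w, hw, hwuniq⟩ := hf3 v hv
        have hwa : w ≠ a := ne_of_mem_of_not_mem (mem_inter.1 hw).2 ha
        refine ⟨w, hw, ?_⟩
        intro u hu hune
        rw [Function.update_of_ne hwa,
          Function.update_of_ne (ne_of_mem_of_not_mem (mem_inter.1 hu).2 ha)]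
        exact hwuniq u hu hune

/-- Let `Δ` be a positive integer and `G` a graph with maximum degree at most `Δ`. Let
`L = {v : deg v ≤ Δ^(1/3)}`. Then there is a proper colouring `f` of `G[L]` using at most
`2 * Δ^(1/3) + 1` colours such that every vertex `v` of `G` with `N(v) ∩ L ≠ ∅` has a
neighbour `w ∈ N(v) ∩ L` whose colour differs from that of every other vertex of
`N(v) ∩ L`. -/
theorem statement2 (Δ : ℕ) (hΔ : 0 < Δ)
    (V : Type) [Fintype V] [DecidableEq V] (G : SimpleGraph V) [DecidableRel G.Adj]
    (hmax : ∀ v : V, G.degree v ≤ Δ)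
    (L : Finset V) (hL : ∀ v : V, v ∈ L ↔ (G.degree v : ℝ) ≤ (Δ : ℝ) ^ ((1 : ℝ) / 3)) :
    ∃ f : V → ℕ,
      ((L.image f).card : ℝ) ≤ 2 * (Δ : ℝ) ^ ((1 : ℝ) / 3) + 1 ∧
      (∀ u ∈ L, ∀ v ∈ L, G.Adj u v → f u ≠ f v) ∧
      (∀ v : V, (G.neighborFinset v ∩ L).Nonempty →
        ∃ w ∈ G.neighborFinset v ∩ L,
          ∀ u ∈ G.neighborFinset v ∩ L, u ≠ w → f u ≠ f w) := by
  set t : ℕ := ⌊(Δ : ℝ) ^ ((1 : ℝ) / 3)⌋₊ with ht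
  have hdeg : ∀ v ∈ L, G.degree v ≤ t := fun v hv => Nat.le_floor ((hL v).1 hv)
  obtain ⟨f, hf1, hf2, hf3⟩ := key t G L hdeg L (Finset.Subset.refl L)
  refine ⟨f, ?_, hf2, hf3⟩
  have hsub : L.image f ⊆ Finset.range (2 * t + 1) := by
    intro x hx
    obtain ⟨v, hv, rfl⟩ := Finset.mem_image.1 hx
    exact Finset.mem_range.2 (hf1 v hv)
  have hcard : (L.image f).card ≤ 2 * t + 1 := by
    have := Finset.card_le_card hsub
    rwa [Finset.card_range] at this
  have htle : (t : ℝ) ≤ (Δ : ℝ) ^ ((1 : ℝ) / 3) :=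
    Nat.floor_le (Real.rpow_nonneg (Nat.cast_nonneg Δ) _)
  calc ((L.image f).card : ℝ) ≤ (2 * t + 1 : ℕ) := by exact_mod_cast hcard
    _ = 2 * (t : ℝ) + 1 := by push_cast; ring
    _ ≤ 2 * (Δ : ℝ) ^ ((1 : ℝ) / 3) + 1 := by linarith
end

section
/- Let G be a graph, let d be a nonnegative integer, and let L = {v ∈ V(G) : deg_G(v) ≤ d}. Then there is a proper colouring f of the induced subgraph G[L] using at most 2d + 1 colours such that for every vertex v of G with N(v) ∩ L ≠ ∅ there exists w ∈ N(v) ∩ L whose colour f(w) is different from the colour of every other vertex of N(v) ∩ L. -/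
open Finset

lemma statement3_aux (d : ℕ)
    (V : Type) [Fintype V] [DecidableEq V] (G : SimpleGraph V) [DecidableRel G.Adj]
    (L : Finset V) (hL : ∀ v : V, v ∈ L ↔ G.degree v ≤ d) :
    ∀ S : Finset V, S ⊆ L → ∃ f : V → ℕ,
      (∀ u ∈ S, f u ≤ 2 * d) ∧
      (∀ u ∈ S, ∀ v ∈ S, G.Adj u v → f u ≠ f v) ∧
      (∀ v : V, (G.neighborFinset v ∩ S).Nonempty →
        ∃ w ∈ G.neighborFinset v ∩ S,
          ∀ u ∈ G.neighborFinset v ∩ S, u ≠ w → f u ≠ f w) := by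
  intro S
  induction S using Finset.induction_on with
  | empty =>
    intro _
    exact ⟨fun _ => 0, by simp, by simp, fun v hv => by simp at hv⟩
  | @insert a S haS ih =>
    intro hsub
    have hSsub : S ⊆ L := fun x hx => hsub (mem_insert_of_mem hx)
    have haL : a ∈ L := hsub (mem_insert_self a S)
    have hdeg : G.degree a ≤ d := (hL a).1 haL
    obtain ⟨f, hf1, hf2, hf3⟩ := ih hSsub
    -- forbidden colours of coloured neighbours
    set A : Finset ℕ := (G.neighborFinset a ∩ S).image f with hA
    -- forbidden colours of representatives of neighbours
    set B : Finset ℕ := (G.neighborFinset a).biUnion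
      (fun u => if h : (G.neighborFinset u ∩ S).Nonempty
        then {f (hf3 u h).choose} else ∅) with hB
    have hAcard : A.card ≤ d := by
      calc A.card ≤ (G.neighborFinset a ∩ S).card := card_image_le
        _ ≤ (G.neighborFinset a).card := card_le_card (inter_subset_left)
        _ ≤ d := hdeg
    have hBcard : B.card ≤ d := by
      calc B.card ≤ ∑ u ∈ G.neighborFinset a,
          (if h : (G.neighborFinset u ∩ S).Nonempty
            then ({f (hf3 u h).choose} : Finset ℕ) else ∅).card :=
            card_biUnion_le
        _ ≤ ∑ _u ∈ G.neighborFinset a, 1 := by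
            apply Finset.sum_le_sum
            intro u _
            split <;> simp
        _ = (G.neighborFinset a).card := by simp
        _ ≤ d := hdeg
    have hne : (Finset.range (2 * d + 1) \ (A ∪ B)).Nonempty := by
      rw [← Finset.card_pos]
      have h1 : (A ∪ B).card ≤ 2 * d := by
        calc (A ∪ B).card ≤ A.card + B.card := card_union_le A B
          _ ≤ 2 * d := by omega
      have h2 := Finset.le_card_sdiff (A ∪ B) (Finset.range (2 * d + 1))
      rw [Finset.card_range] at h2
      omega
    obtain ⟨c, hc⟩ := hne
    rw [Finset.mem_sdiff, Finset.mem_range, Finset.mem_union] at hc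
    obtain ⟨hclt, hcAB⟩ := hc
    refine ⟨Function.update f a c, ?_, ?_, ?_⟩
    · intro u hu
      rcases Finset.mem_insert.1 hu with hua | huS
      · rw [hua, Function.update_self]; omega
      · rw [Function.update_of_ne (ne_of_mem_of_not_mem huS haS)]
        exact hf1 u huS
    · intro u hu v hv hadj
      rcases Finset.mem_insert.1 hu with hua | huS <;>
        rcases Finset.mem_insert.1 hv with hva | hvS
      · subst hua; subst hva; exact absurd hadj (G.irrefl)
      · subst hua
        rw [Function.update_self, Function.update_of_ne (ne_of_mem_of_not_mem hvS haS)]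
        intro hcf
        apply hcAB
        left
        rw [hA, Finset.mem_image]
        exact ⟨v, Finset.mem_inter.2 ⟨(SimpleGraph.mem_neighborFinset ..).2 hadj, hvS⟩, hcf.symm⟩
      · subst hva
        rw [Function.update_self, Function.update_of_ne (ne_of_mem_of_not_mem huS haS)]
        intro hcf
        apply hcAB
        left
        rw [hA, Finset.mem_image]
        exact ⟨u, Finset.mem_inter.2 ⟨(SimpleGraph.mem_neighborFinset ..).2 hadj.symm, huS⟩, hcf⟩
      · rw [Function.update_of_ne (ne_of_mem_of_not_mem huS haS),
          Function.update_of_ne (ne_of_mem_of_not_mem hvS haS)]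
        exact hf2 u huS v hvS hadj
    · intro v hv
      by_cases hadj : G.Adj v a
      · by_cases hS : (G.neighborFinset v ∩ S).Nonempty
        · obtain ⟨hwmem, hwuniq⟩ := (hf3 v hS).choose_spec
          set w := (hf3 v hS).choose with hw
          have hwS : w ∈ S := (Finset.mem_inter.1 hwmem).2
          have hwa : w ≠ a := by rintro rfl; exact haS hwS
          have hfwB : f w ∈ B := by
            rw [hB, Finset.mem_biUnion]
            refine ⟨v, (SimpleGraph.mem_neighborFinset ..).2 hadj.symm, ?_⟩
            rw [dif_pos hS]
            exact Finset.mem_singleton_self _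
          refine ⟨w, ?_, ?_⟩
          · exact Finset.mem_inter.2 ⟨(Finset.mem_inter.1 hwmem).1,
              mem_insert_of_mem hwS⟩
          · intro u hu hune
            rw [Function.update_of_ne hwa]
            rcases Finset.mem_insert.1 (Finset.mem_inter.1 hu).2 with rfl | huS
            · rw [Function.update_self]
              intro hcf
              exact hcAB (Or.inr (hcf ▸ hfwB))
            · rw [Function.update_of_ne (ne_of_mem_of_not_mem huS haS)]
              exact hwuniq u (Finset.mem_inter.2 ⟨(Finset.mem_inter.1 hu).1, huS⟩) hune
        · refine ⟨a, Finset.mem_inter.2 ⟨(SimpleGraph.mem_neighborFinset ..).2 hadj,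
            mem_insert_self a S⟩, ?_⟩
          intro u hu hune
          exfalso
          rcases Finset.mem_insert.1 (Finset.mem_inter.1 hu).2 with rfl | huS
          · exact hune rfl
          · exact hS ⟨u, Finset.mem_inter.2 ⟨(Finset.mem_inter.1 hu).1, huS⟩⟩
      · have heq : G.neighborFinset v ∩ insert a S = G.neighborFinset v ∩ S := by
          ext x
          simp only [Finset.mem_inter, Finset.mem_insert]
          constructor
          · rintro ⟨hx, rfl | hx2⟩
            · exact absurd ((SimpleGraph.mem_neighborFinset ..).1 hx) hadj
            · exact ⟨hx, hx2⟩
          · rintro ⟨hx, hx2⟩; exact ⟨hx, Or.inr hx2⟩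
        rw [heq] at hv ⊢
        obtain ⟨w, hwmem, hwuniq⟩ := hf3 v hv
        have hwS : w ∈ S := (Finset.mem_inter.1 hwmem).2
        refine ⟨w, hwmem, ?_⟩
        intro u hu hune
        have huS : u ∈ S := (Finset.mem_inter.1 hu).2
        rw [Function.update_of_ne (ne_of_mem_of_not_mem huS haS),
          Function.update_of_ne (ne_of_mem_of_not_mem hwS haS)]
        exact hwuniq u hu hune

/-- Let `G` be a graph, `d` a nonnegative integer, and `L = {v : deg v ≤ d}`. Then there is
a proper colouring `f` of `G[L]` using at most `2 * d + 1` colours such that every vertex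
`v` of `G` with `N(v) ∩ L ≠ ∅` has a neighbour `w ∈ N(v) ∩ L` whose colour differs from
that of every other vertex of `N(v) ∩ L`. -/
theorem statement3 (d : ℕ)
    (V : Type) [Fintype V] [DecidableEq V] (G : SimpleGraph V) [DecidableRel G.Adj]
    (L : Finset V) (hL : ∀ v : V, v ∈ L ↔ G.degree v ≤ d) :
    ∃ f : V → ℕ,
      (L.image f).card ≤ 2 * d + 1 ∧
      (∀ u ∈ L, ∀ v ∈ L, G.Adj u v → f u ≠ f v) ∧
      (∀ v : V, (G.neighborFinset v ∩ L).Nonempty →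
        ∃ w ∈ G.neighborFinset v ∩ L,
          ∀ u ∈ G.neighborFinset v ∩ L, u ≠ w → f u ≠ f w) := by
  obtain ⟨f, hf1, hf2, hf3⟩ := statement3_aux d V G L hL L (le_refl L)
  refine ⟨f, ?_, hf2, hf3⟩
  calc (L.image f).card ≤ (Finset.range (2 * d + 1)).card := by
        apply Finset.card_le_card
        intro x hx
        obtain ⟨u, hu, rfl⟩ := Finset.mem_image.1 hx
        rw [Finset.mem_range]
        exact Nat.lt_succ_of_le (hf1 u hu)
    _ = 2 * d + 1 := Finset.card_range _
end

section
/- There exists a positive integer Δ₀ such that for every integer Δ ≥ Δ₀ the following holds. Let t = ⌈18·Δ^{1/3}⌉ and let S be a finite set with 50 ≤ |S| ≤ Δ^{1/3}. If each element of S is assigned independently and uniformly at random to one of t parts, then the probability that no part contains exactly one element of S is at most 1/(20·Δ⁴). Equivalently, the number of functions h : S → [t] such that no element of [t] has exactly one preimage is at most t^{|S|}/(20·Δ⁴). -/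
private lemma aux_nat12 : ∀ n : ℕ, 50 ≤ n → 400 * n ^ 24 ≤ 12 ^ n := by
  intro n hn
  induction n, hn using Nat.le_induction with
  | base => norm_num
  | succ n hn ih =>
    have h1 : 50 * (n + 1) ≤ 51 * n := by omega
    have h2 : (50 * (n + 1)) ^ 24 ≤ (51 * n) ^ 24 := Nat.pow_le_pow_left h1 24
    have h3 : (51:ℕ) ^ 24 ≤ 12 * 50 ^ 24 := by norm_num
    have key : (n + 1) ^ 24 * 50 ^ 24 ≤ 12 * n ^ 24 * 50 ^ 24 := by
      calc (n + 1) ^ 24 * 50 ^ 24 = (50 * (n + 1)) ^ 24 := by rw [mul_pow]; ring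
        _ ≤ (51 * n) ^ 24 := h2
        _ = 51 ^ 24 * n ^ 24 := by rw [mul_pow]
        _ ≤ 12 * 50 ^ 24 * n ^ 24 := Nat.mul_le_mul_right _ h3
        _ = 12 * n ^ 24 * 50 ^ 24 := by ring
    have h4 : (n + 1) ^ 24 ≤ 12 * n ^ 24 := Nat.le_of_mul_le_mul_right key (by norm_num)
    calc 400 * (n + 1) ^ 24 ≤ 400 * (12 * n ^ 24) := Nat.mul_le_mul_left _ h4
      _ = 12 * (400 * n ^ 24) := by ring
      _ ≤ 12 * 12 ^ n := Nat.mul_le_mul_left _ ih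
      _ = 12 ^ (n + 1) := by rw [pow_succ]; ring

private lemma aux_fact : ∀ m : ℕ, (m : ℝ) ^ m ≤ 3 ^ m * (Nat.factorial m) := by
  intro m
  induction m with
  | zero => simp
  | succ m ih =>
    rcases Nat.eq_zero_or_pos m with rfl | hm
    · norm_num [Nat.factorial]
    · have hm0 : (0:ℝ) < m := by exact_mod_cast hm
      have h1 : ((m:ℝ) + 1) ≤ m * Real.exp (1 / m) := by
        have h := Real.add_one_le_exp (1 / (m:ℝ))
        have h' : (m:ℝ) * (1 / m + 1) ≤ m * Real.exp (1 / m) :=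
          mul_le_mul_of_nonneg_left h hm0.le
        have e : (m:ℝ) * (1 / m + 1) = m + 1 := by field_simp; ring
        linarith [h', e ▸ h']
      have h2 : ((m:ℝ) + 1) ^ m ≤ (m:ℝ) ^ m * Real.exp 1 := by
        calc ((m:ℝ) + 1) ^ m ≤ ((m:ℝ) * Real.exp (1 / m)) ^ m := by
              exact pow_le_pow_left₀ (by positivity) h1 m

          _ = (m:ℝ) ^ m * Real.exp (1 / m) ^ m := mul_pow _ _ _
          _ = (m:ℝ) ^ m * Real.exp 1 := by
              rw [← Real.exp_nat_mul]
              congr 1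
              field_simp
      have h3 : Real.exp 1 ≤ 3 := by
        have := Real.exp_one_lt_d9
        linarith
      have h4 : ((m:ℝ) + 1) ^ m ≤ (m:ℝ) ^ m * 3 := by nlinarith [pow_nonneg hm0.le m, Real.exp_pos 1]
      have hfact : (0:ℝ) ≤ (Nat.factorial m : ℝ) := by positivity
      calc ((m + 1 : ℕ) : ℝ) ^ (m + 1) = ((m:ℝ) + 1) * ((m:ℝ) + 1) ^ m := by push_cast; ring
        _ ≤ ((m:ℝ) + 1) * ((m:ℝ) ^ m * 3) := by
            have : (0:ℝ) ≤ (m:ℝ) + 1 := by positivity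
            exact mul_le_mul_of_nonneg_left h4 this
        _ ≤ ((m:ℝ) + 1) * (3 ^ m * (Nat.factorial m) * 3) := by
            have : (0:ℝ) ≤ (m:ℝ) + 1 := by positivity
            gcongr
        _ = 3 ^ (m + 1) * (((m:ℝ) + 1) * (Nat.factorial m)) := by ring
        _ = 3 ^ (m + 1) * (Nat.factorial (m + 1)) := by
            rw [Nat.factorial_succ]
            push_cast
            ring

/-- There exists `Δ₀` such that for every `Δ ≥ Δ₀` the following holds. Let
`t = ⌈18 Δ^(1/3)⌉` and let `S` be a finite set with `50 ≤ |S| ≤ Δ^(1/3)`. The number of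
functions `h : S → [t]` such that no element of `[t]` has exactly one preimage is at most
`t^|S| / (20 Δ⁴)`; equivalently, if each element of `S` is assigned independently and
uniformly at random to one of `t` parts, the probability that no part contains exactly one
element of `S` is at most `1/(20 Δ⁴)`. -/
theorem statement7 :
    ∃ Δ₀ : ℕ, 0 < Δ₀ ∧ ∀ Δ : ℕ, Δ₀ ≤ Δ →
      ∀ t : ℕ, t = ⌈(18 : ℝ) * (Δ : ℝ) ^ ((1 : ℝ) / 3)⌉₊ →
      ∀ (S : Type) [Fintype S] [DecidableEq S],
        50 ≤ Fintype.card S → (Fintype.card S : ℝ) ≤ (Δ : ℝ) ^ ((1 : ℝ) / 3) →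
        ((Finset.univ.filter (fun h : S → Fin t =>
            ∀ i : Fin t, (Finset.univ.filter (fun s : S => h s = i)).card ≠ 1)).card : ℝ)
          ≤ (t : ℝ) ^ (Fintype.card S) / (20 * (Δ : ℝ) ^ 4) := by
  refine ⟨1, one_pos, ?_⟩
  intro Δ _ t ht S _ _ hn50 hnR
  classical
  set n := Fintype.card S with hn
  set R : ℝ := (Δ : ℝ) ^ ((1:ℝ)/3) with hR
  have hR50 : (50:ℝ) ≤ R := le_trans (by exact_mod_cast hn50) hnR
  have htR : 18 * R ≤ (t:ℝ) := by
    rw [ht]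
    exact Nat.le_ceil _
  set m := n / 2 with hm
  set K := n - m with hK
  have hmK : n = m + K := by omega
  have h2m : 2 * m ≤ n := by omega
  have h2K : n ≤ 2 * K := by omega
  have h25K : 25 ≤ K := by omega
  have hmleK : m ≤ K := by omega
  have hD0 : (0:ℝ) ≤ (Δ:ℝ) := by positivity
  have hDR : ((Δ:ℝ)) ^ 4 = R ^ 12 := by
    rw [hR, ← Real.rpow_natCast ((Δ:ℝ) ^ ((1:ℝ)/3)) 12, ← Real.rpow_mul hD0,
      ← Real.rpow_natCast ((Δ:ℝ)) 4]
    norm_num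
  have hnt : n ≤ t := by
    have h1 : (n:ℝ) ≤ (t:ℝ) := le_trans hnR (le_trans (by linarith) htR)
    exact_mod_cast h1
  have hmt : m ≤ t := by omega
  set bad := Finset.univ.filter (fun h : S → Fin t =>
      ∀ i : Fin t, (Finset.univ.filter (fun s : S => h s = i)).card ≠ 1) with hbad
  -- combinatorial bound
  have hcount : bad.card ≤ Nat.choose t m * m ^ n := by
    have hsub : bad ⊆ (Finset.powersetCard m (Finset.univ : Finset (Fin t))).biUnion
        (fun T => Finset.univ.filter (fun h : S → Fin t => ∀ s, h s ∈ T)) := by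
      intro h hh
      rw [hbad, Finset.mem_filter] at hh
      have hP := hh.2
      have himg : (Finset.image h Finset.univ).card ≤ m := by
        have hfib : ∀ i ∈ Finset.image h Finset.univ,
            2 ≤ (Finset.univ.filter (fun s : S => h s = i)).card := by
          intro i hi
          obtain ⟨s, -, hs⟩ := Finset.mem_image.mp hi
          have hpos : 0 < (Finset.univ.filter (fun s : S => h s = i)).card :=
            Finset.card_pos.mpr ⟨s, Finset.mem_filter.mpr ⟨Finset.mem_univ s, hs⟩⟩
          have := hP i
          omega
        have hsum : ∑ i ∈ Finset.image h Finset.univ,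
            (Finset.univ.filter (fun s : S => h s = i)).card = n := by
          rw [← Finset.card_eq_sum_card_fiberwise
            (fun x _ => Finset.mem_image_of_mem h (Finset.mem_univ x))]
          simp [hn]
        have hc2 : (Finset.image h Finset.univ).card * 2 ≤ n := by
          have := Finset.card_nsmul_le_sum (Finset.image h Finset.univ)
            (fun i => (Finset.univ.filter (fun s : S => h s = i)).card) 2 hfib
          rw [hsum] at this
          simpa [smul_eq_mul] using this
        omega
      obtain ⟨T, hsubT, -, hTcard⟩ := Finset.exists_subsuperset_card_eq
        (Finset.subset_univ (Finset.image h Finset.univ)) himg (by simpa using hmt)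
      refine Finset.mem_biUnion.mpr ⟨T, ?_, ?_⟩
      · exact Finset.mem_powersetCard.mpr ⟨Finset.subset_univ T, hTcard⟩
      · exact Finset.mem_filter.mpr ⟨Finset.mem_univ h,
          fun s => hsubT (Finset.mem_image_of_mem h (Finset.mem_univ s))⟩
    calc bad.card
        ≤ ((Finset.powersetCard m (Finset.univ : Finset (Fin t))).biUnion
            (fun T => Finset.univ.filter (fun h : S → Fin t => ∀ s, h s ∈ T))).card :=
          Finset.card_le_card hsub
      _ ≤ ∑ T ∈ Finset.powersetCard m (Finset.univ : Finset (Fin t)),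
            (Finset.univ.filter (fun h : S → Fin t => ∀ s, h s ∈ T)).card :=
          Finset.card_biUnion_le
      _ ≤ ∑ T ∈ Finset.powersetCard m (Finset.univ : Finset (Fin t)), m ^ n := by
          refine Finset.sum_le_sum (fun T hT => ?_)
          rw [Finset.mem_powersetCard] at hT
          have heq : Finset.univ.filter (fun h : S → Fin t => ∀ s, h s ∈ T)
              = Fintype.piFinset (fun _ : S => T) := by
            ext g
            simp [Fintype.mem_piFinset]
          rw [heq, Fintype.card_piFinset]
          simp [Finset.prod_const, hT.2, hn]
      _ = (Finset.powersetCard m (Finset.univ : Finset (Fin t))).card * m ^ n := by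
          rw [Finset.sum_const, smul_eq_mul]
      _ = Nat.choose t m * m ^ n := by
          rw [Finset.card_powersetCard, Finset.card_univ, Fintype.card_fin]
  -- numeric facts
  have hCF : (Nat.choose t m : ℝ) * (Nat.factorial m : ℝ) ≤ (t:ℝ) ^ m := by
    have h1 := Nat.descFactorial_le_pow t m
    rw [Nat.descFactorial_eq_factorial_mul_choose] at h1
    have h2 : ((Nat.factorial m * Nat.choose t m : ℕ) : ℝ) ≤ ((t ^ m : ℕ) : ℝ) := by
      exact_mod_cast h1
    push_cast at h2
    linarith
  have hfacm := aux_fact m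
  have h12K : 20 * (n:ℝ) ^ 12 ≤ 12 ^ K := by
    have h := aux_nat12 n hn50
    have hcast : (400:ℝ) * (n:ℝ) ^ 24 ≤ 12 ^ n := by exact_mod_cast h
    have h1 : (12:ℝ) ^ n ≤ 12 ^ (K * 2) := by
      apply pow_le_pow_right₀ (by norm_num)
      omega
    have hsq : (20 * (n:ℝ) ^ 12) ^ 2 ≤ ((12:ℝ) ^ K) ^ 2 := by
      rw [← pow_mul]
      calc (20 * (n:ℝ) ^ 12) ^ 2 = 400 * (n:ℝ) ^ 24 := by ring
        _ ≤ 12 ^ n := hcast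
        _ ≤ 12 ^ (K * 2) := h1
    exact (pow_le_pow_iff_left₀ (by positivity) (by positivity) (by norm_num)).mp hsq
  have hn0 : (0:ℝ) ≤ (n:ℝ) := by positivity
  have hR0 : (0:ℝ) ≤ R := by linarith
  have main : 20 * R ^ 12 * (n:ℝ) ^ K ≤ 12 ^ K * R ^ K := by
    obtain ⟨j, hj⟩ : ∃ j, K = 25 + j := ⟨K - 25, by omega⟩
    rw [hj] at h12K ⊢
    have h13 : (n:ℝ) ^ 13 ≤ R ^ 13 := pow_le_pow_left₀ hn0 hnR 13
    have hj : (n:ℝ) ^ j ≤ R ^ j := pow_le_pow_left₀ hn0 hnR j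
    calc 20 * R ^ 12 * (n:ℝ) ^ (25 + j)
        = (20 * (n:ℝ) ^ 12) * ((n:ℝ) ^ 13 * (R ^ 12 * (n:ℝ) ^ j)) := by
          rw [pow_add]; ring
      _ ≤ (12 ^ (25 + j)) * (R ^ 13 * (R ^ 12 * R ^ j)) := by
          gcongr <;> first | positivity | exact h12K
      _ = 12 ^ (25 + j) * R ^ (25 + j) := by rw [pow_add]; ring
  have key : 20 * R ^ 12 * 3 ^ m * ((m:ℝ)) ^ K ≤ (t:ℝ) ^ K := by
    have hm2 : 2 * (m:ℝ) ≤ (n:ℝ) := by exact_mod_cast h2m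
    have h2 : (20 * R ^ 12 * 3 ^ K * ((m:ℝ)) ^ K) * 2 ^ K ≤ (18 ^ K * R ^ K) * 2 ^ K := by
      calc (20 * R ^ 12 * 3 ^ K * ((m:ℝ)) ^ K) * 2 ^ K
          = 20 * R ^ 12 * 3 ^ K * (2 * (m:ℝ)) ^ K := by rw [mul_pow]; ring
        _ ≤ 20 * R ^ 12 * 3 ^ K * ((n:ℝ)) ^ K := by
            gcongr
        _ = 3 ^ K * (20 * R ^ 12 * (n:ℝ) ^ K) := by ring
        _ ≤ 3 ^ K * (12 ^ K * R ^ K) := by gcongr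
        _ = ((3:ℝ) * 12) ^ K * R ^ K := by rw [mul_pow]; ring
        _ = ((18:ℝ) * 2) ^ K * R ^ K := by norm_num
        _ = (18 ^ K * R ^ K) * 2 ^ K := by rw [mul_pow]; ring
    have h3 : 20 * R ^ 12 * 3 ^ K * ((m:ℝ)) ^ K ≤ 18 ^ K * R ^ K :=
      le_of_mul_le_mul_right h2 (by positivity)
    calc 20 * R ^ 12 * 3 ^ m * ((m:ℝ)) ^ K
        ≤ 20 * R ^ 12 * 3 ^ K * ((m:ℝ)) ^ K := by
          gcongr
          norm_num
      _ ≤ 18 ^ K * R ^ K := h3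
      _ = (18 * R) ^ K := (mul_pow _ _ _).symm
      _ ≤ (t:ℝ) ^ K := pow_le_pow_left₀ (by positivity) htR K
  -- assemble
  have hfpos : (0:ℝ) < (Nat.factorial m : ℝ) := by exact_mod_cast Nat.factorial_pos m
  have hDpos : (0:ℝ) < 20 * ((Δ:ℝ)) ^ 4 := by
    rw [hDR]; positivity
  rw [le_div_iff₀ hDpos]
  have hb : (bad.card : ℝ) ≤ (Nat.choose t m : ℝ) * (m:ℝ) ^ n := by
    have : ((bad.card : ℕ) : ℝ) ≤ ((Nat.choose t m * m ^ n : ℕ) : ℝ) := by exact_mod_cast hcount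
    push_cast at this
    linarith
  have main2 : ((Nat.choose t m : ℝ) * (m:ℝ) ^ n * (20 * ((Δ:ℝ)) ^ 4)) * (Nat.factorial m)
      ≤ (t:ℝ) ^ n * (Nat.factorial m) := by
    rw [hDR]
    calc ((Nat.choose t m : ℝ) * (m:ℝ) ^ n * (20 * R ^ 12)) * (Nat.factorial m)
        = ((Nat.choose t m : ℝ) * (Nat.factorial m)) * ((m:ℝ) ^ m)
            * (20 * R ^ 12 * (m:ℝ) ^ K) := by
          rw [hmK, pow_add]; ring
      _ ≤ ((t:ℝ) ^ m) * (3 ^ m * (Nat.factorial m)) * (20 * R ^ 12 * (m:ℝ) ^ K) := by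
          gcongr <;> positivity
      _ = ((t:ℝ) ^ m * (Nat.factorial m)) * (20 * R ^ 12 * 3 ^ m * (m:ℝ) ^ K) := by ring
      _ ≤ ((t:ℝ) ^ m * (Nat.factorial m)) * ((t:ℝ) ^ K) := by gcongr
      _ = (t:ℝ) ^ n * (Nat.factorial m) := by rw [hmK, pow_add]; ring
  have main3 : (Nat.choose t m : ℝ) * (m:ℝ) ^ n * (20 * ((Δ:ℝ)) ^ 4) ≤ (t:ℝ) ^ n :=
    le_of_mul_le_mul_right main2 hfpos
  calc (bad.card : ℝ) * (20 * ((Δ:ℝ)) ^ 4)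
      ≤ ((Nat.choose t m : ℝ) * (m:ℝ) ^ n) * (20 * ((Δ:ℝ)) ^ 4) := by
        exact mul_le_mul_of_nonneg_right hb hDpos.le
    _ ≤ (t:ℝ) ^ n := main3
end

section
/- Let Δ > 1 be a real number, let G be a graph, let H' ⊆ V(G), and let v ∈ H' be a vertex with deg_G(v) ≤ Δ. Then the number of vertices u ∈ H' \ {v} such that u and v have at least Δ^{1/3}/log Δ common neighbours w in G with |N(w) ∩ H'| ≤ 50 is at most 50·Δ^{2/3}·log Δ. -/
open scoped Classical

/-- Let `Δ > 1` be a real number, `G` a graph, `H' ⊆ V(G)`, and `v ∈ H'` with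
`deg v ≤ Δ`. Then the number of `u ∈ H' \ {v}` such that `u` and `v` have at least
`Δ^(1/3)/log Δ` common neighbours `w` with `|N(w) ∩ H'| ≤ 50` is at most
`50 Δ^(2/3) log Δ`. -/
theorem statement10 (Δ : ℝ) (hΔ : 1 < Δ)
    (V : Type) [Fintype V] [DecidableEq V] (G : SimpleGraph V) [DecidableRel G.Adj]
    (H' : Finset V) (v : V) (hv : v ∈ H') (hdeg : (G.degree v : ℝ) ≤ Δ) :
    (((H'.erase v).filter (fun u =>
        Δ ^ ((1 : ℝ) / 3) / Real.log Δ ≤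
          (((G.neighborFinset u ∩ G.neighborFinset v).filter
            (fun w => (G.neighborFinset w ∩ H').card ≤ 50)).card : ℝ))).card : ℝ)
      ≤ 50 * Δ ^ ((2 : ℝ) / 3) * Real.log Δ := by
  have hΔ0 : (0:ℝ) < Δ := by linarith
  have hlog : 0 < Real.log Δ := Real.log_pos hΔ
  set t : ℝ := Δ ^ ((1 : ℝ) / 3) / Real.log Δ with ht
  have htpos : 0 < t := div_pos (Real.rpow_pos_of_pos hΔ0 _) hlog
  set A : V → Finset V := fun u =>
    (G.neighborFinset u ∩ G.neighborFinset v).filter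
      (fun w => (G.neighborFinset w ∩ H').card ≤ 50) with hA
  set S : Finset V := (H'.erase v).filter (fun u => t ≤ ((A u).card : ℝ)) with hS
  set W : Finset V := (G.neighborFinset v).filter
      (fun w => (G.neighborFinset w ∩ H').card ≤ 50) with hWdef
  have hAW : ∀ u, A u = W.filter (fun w => G.Adj u w) := by
    intro u
    ext w
    simp only [hA, hWdef, Finset.mem_filter, Finset.mem_inter,
      SimpleGraph.mem_neighborFinset]
    tauto
  -- double counting
  have hsum : ∑ u ∈ S, (A u).card = ∑ w ∈ W, (S.filter (fun u => G.Adj u w)).card := by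
    calc ∑ u ∈ S, (A u).card
        = ∑ u ∈ S, ∑ w ∈ W, (if G.Adj u w then 1 else 0) := by
          refine Finset.sum_congr rfl fun u _ => ?_
          rw [hAW u, Finset.card_filter]
      _ = ∑ w ∈ W, ∑ u ∈ S, (if G.Adj u w then 1 else 0) := Finset.sum_comm
      _ = ∑ w ∈ W, (S.filter (fun u => G.Adj u w)).card := by
          refine Finset.sum_congr rfl fun w _ => ?_
          rw [Finset.card_filter]
  have hupper : ∑ u ∈ S, (A u).card ≤ 50 * G.degree v := by
    rw [hsum]
    calc ∑ w ∈ W, (S.filter (fun u => G.Adj u w)).card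
        ≤ ∑ w ∈ W, 50 := by
          refine Finset.sum_le_sum fun w hw => ?_
          have hw50 : (G.neighborFinset w ∩ H').card ≤ 50 :=
            (Finset.mem_filter.mp hw).2
          refine le_trans (Finset.card_le_card ?_) hw50
          intro u hu
          simp only [Finset.mem_filter] at hu
          simp only [Finset.mem_inter, SimpleGraph.mem_neighborFinset]
          exact ⟨hu.2.symm, Finset.mem_of_mem_erase (Finset.mem_of_mem_filter _ hu.1)⟩
      _ = 50 * W.card := by rw [Finset.sum_const, smul_eq_mul, mul_comm]
      _ ≤ 50 * G.degree v := by
          have : W.card ≤ G.degree v := by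
            rw [← SimpleGraph.card_neighborFinset_eq_degree]
            exact Finset.card_filter_le _ _
          omega
  have hlower : t * S.card ≤ (∑ u ∈ S, (A u).card : ℝ) := by
    push_cast
    calc t * S.card = ∑ _u ∈ S, t := by rw [Finset.sum_const, nsmul_eq_mul]; ring
      _ ≤ ∑ u ∈ S, ((A u).card : ℝ) :=
          Finset.sum_le_sum fun u hu => (Finset.mem_filter.mp hu).2
  have hmain : t * S.card ≤ 50 * Δ := by
    refine hlower.trans ?_
    calc (∑ u ∈ S, (A u).card : ℝ) ≤ ((50 * G.degree v : ℕ) : ℝ) := by exact_mod_cast hupper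
      _ ≤ 50 * Δ := by push_cast; nlinarith
  have hkey : Δ ^ ((2:ℝ)/3) * Δ ^ ((1:ℝ)/3) = Δ := by
    rw [← Real.rpow_add hΔ0]; norm_num
  have hfinal : (S.card : ℝ) ≤ 50 * Δ / t := by
    rw [le_div_iff₀ htpos, mul_comm]; exact hmain
  refine hfinal.trans_eq ?_
  rw [ht]
  rw [div_div_eq_mul_div, mul_div_assoc]
  field_simp
  nlinarith [hkey, Real.rpow_pos_of_pos hΔ0 ((1:ℝ)/3), Real.rpow_pos_of_pos hΔ0 ((2:ℝ)/3)]
end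

section
/- Let G' be a graph whose vertex set is partitioned into sets H' and L' such that every vertex of L' has all of its neighbours in H'. Then for every vertex v ∈ H', the number of vertices of H' which are nearby v is at most |N_{G'}(v) ∩ L'|/2. -/
open scoped Classical

/-- `u` is nearby `v` if `u ≠ v` and `u` and `v` have at least 100 common neighbours
`w ∈ L'` with `deg w ≤ 50`. -/
def Nearby {V : Type*} [Fintype V] [DecidableEq V]
    (G' : SimpleGraph V) [DecidableRel G'.Adj] (L' : Finset V) (u v : V) : Prop :=
  u ≠ v ∧ 100 ≤ (((L' ∩ G'.neighborFinset u) ∩ G'.neighborFinset v).filter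
      (fun w => G'.degree w ≤ 50)).card

/-- If the vertex set of `G'` is partitioned into `H'` and `L'` with every vertex of `L'`
having all of its neighbours in `H'`, then for every `v ∈ H'` the number of vertices of
`H'` nearby `v` is at most `|N(v) ∩ L'| / 2`. -/
theorem statement11
    (V : Type) [Fintype V] [DecidableEq V] (G' : SimpleGraph V) [DecidableRel G'.Adj]
    (H' L' : Finset V)
    (hdisj : Disjoint H' L') (hunion : H' ∪ L' = Finset.univ)
    (hL' : ∀ w ∈ L', G'.neighborFinset w ⊆ H')
    (v : V) (hv : v ∈ H') :
    ((H'.filter (fun u => Nearby G' L' u v)).card : ℝ) ≤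
      ((G'.neighborFinset v ∩ L').card : ℝ) / 2 := by
  classical
  set S := H'.filter (fun u => Nearby G' L' u v) with hS
  set W := ((G'.neighborFinset v ∩ L').filter (fun w => G'.degree w ≤ 50)) with hW
  have key : 100 * S.card ≤ 50 * W.card := by
    calc 100 * S.card = ∑ _u ∈ S, 100 := by
          rw [Finset.sum_const, smul_eq_mul, mul_comm]
      _ ≤ ∑ u ∈ S, (W.filter (fun w => G'.Adj u w)).card := by
          apply Finset.sum_le_sum
          intro u hu
          have hn : Nearby G' L' u v := (Finset.mem_filter.mp hu).2
          refine le_trans hn.2 (Finset.card_le_card ?_)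
          intro w hw
          simp only [Finset.mem_filter, Finset.mem_inter,
            SimpleGraph.mem_neighborFinset, hW] at hw ⊢
          exact ⟨⟨⟨hw.1.2, hw.1.1.1⟩, hw.2⟩, (hw.1.1.2)⟩
      _ = ∑ u ∈ S, ∑ w ∈ W, (if G'.Adj u w then 1 else 0) :=
          Finset.sum_congr rfl fun u _ => Finset.card_filter _ _
      _ = ∑ w ∈ W, ∑ u ∈ S, (if G'.Adj u w then 1 else 0) := Finset.sum_comm
      _ = ∑ w ∈ W, (S.filter (fun u => G'.Adj u w)).card :=
          Finset.sum_congr rfl fun w _ => (Finset.card_filter _ _).symm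
      _ ≤ ∑ _w ∈ W, 50 := by
          apply Finset.sum_le_sum
          intro w hw
          have hdeg : G'.degree w ≤ 50 := (Finset.mem_filter.mp hw).2
          refine le_trans (Finset.card_le_card ?_) ((G'.card_neighborFinset_eq_degree w) ▸ hdeg)
          intro u hu
          have := (Finset.mem_filter.mp hu).2
          simpa [SimpleGraph.mem_neighborFinset] using this.symm
      _ = 50 * W.card := by rw [Finset.sum_const, smul_eq_mul, mul_comm]
  have hWle : W.card ≤ (G'.neighborFinset v ∩ L').card :=
    Finset.card_le_card (Finset.filter_subset _ _)
  have : 2 * S.card ≤ (G'.neighborFinset v ∩ L').card := by omega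
  rw [le_div_iff₀ (by norm_num)]
  calc (S.card : ℝ) * 2 = (2 * S.card : ℕ) := by push_cast; ring
    _ ≤ _ := by exact_mod_cast this
end

section
/- Let t be a positive integer. Let G' be a graph whose vertex set is partitioned into sets H' and L' such that every vertex of L' has all of its neighbours in H'. Let w ∈ L' be a vertex with N_{G'}(w) ≠ ∅. Assign to each vertex u of H' an independent uniformly random index h(u) ∈ [t], inducing the partition {h^{-1}(i) : i ∈ [t]} of H'. Then the probability that w is dangerous with respect to this partition is at most |N_{G'}(w)|³/t². -/
open scoped Classical

/-- `w ∈ L'` is dangerous with respect to the partition `{Hs i : i ∈ [t]}` of `H'`. -/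
def Dangerous {V : Type*} [Fintype V] [DecidableEq V]
    (G' : SimpleGraph V) [DecidableRel G'.Adj] (L' : Finset V)
    {t : ℕ} (Hs : Fin t → Finset V) (w : V) : Prop :=
  ∀ u ∈ G'.neighborFinset w, ∃ i : Fin t, ∃ u' ∈ (G'.neighborFinset w ∩ Hs i) \ {u},
    u ∈ Hs i ∧ ¬ G'.Adj u u' ∧ ¬ Nearby G' L' u' u ∧
    ∃ u'' ∈ G'.neighborFinset w \ (G'.neighborFinset u ∪ {u, u'}),
      ∃ j : Fin t, u'' ∈ Hs j ∧ 2 ≤ (Hs j ∩ G'.neighborFinset w).card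

/-- The part `h⁻¹(i)` of the partition of `H'` induced by an assignment `h : H' → [t]`. -/
def part {V : Type*} [DecidableEq V] (H' : Finset V) {t : ℕ}
    (h : H' → Fin t) (i : Fin t) : Finset V :=
  (H'.attach.filter (fun u => h u = i)).map ⟨Subtype.val, Subtype.val_injective⟩

lemma mem_part {V : Type*} [DecidableEq V] (H' : Finset V) {t : ℕ}
    (h : H' → Fin t) (i : Fin t) (x : V) :
    x ∈ part H' h i ↔ ∃ hx : x ∈ H', h ⟨x, hx⟩ = i := by
  simp only [part, Finset.mem_map, Finset.mem_filter, Finset.mem_attach, true_and,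
    Function.Embedding.coeFn_mk]
  constructor
  · rintro ⟨⟨a, ha⟩, hi, rfl⟩
    exact ⟨ha, hi⟩
  · rintro ⟨hx, hi⟩
    exact ⟨⟨x, hx⟩, hi, rfl⟩

lemma count_pair_le {α : Type*} [Fintype α] [DecidableEq α] (t : ℕ)
    (a b c d : α) (hab : a ≠ b) (hcd : c ≠ d) (hca : c ≠ a) (hcb : c ≠ b) :
    (Finset.univ.filter (fun h : α → Fin t => h a = h b ∧ h c = h d)).card
      ≤ t ^ (Fintype.card α - 2) := by
  classical
  have key : (Finset.univ.filter (fun h : α → Fin t => h a = h b ∧ h c = h d)).card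
      ≤ (Finset.univ : Finset ({x : α // x ≠ b ∧ x ≠ c} → Fin t)).card := by
    apply Finset.card_le_card_of_injOn
      (fun (h : α → Fin t) (x : {x : α // x ≠ b ∧ x ≠ c}) => h x.1)
      (fun _ _ => Finset.mem_univ _)
    intro h₁ m₁ h₂ m₂ heq
    simp only [Finset.mem_coe, Finset.mem_filter, Finset.mem_univ, true_and] at m₁ m₂
    have hx : ∀ x, x ≠ b → x ≠ c → h₁ x = h₂ x := fun x h1 h2 =>
      congrFun heq (⟨x, h1, h2⟩ : {x : α // x ≠ b ∧ x ≠ c})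
    have hb' : h₁ b = h₂ b := by
      rw [← m₁.1, ← m₂.1]; exact hx a hab hca.symm
    have hc' : h₁ c = h₂ c := by
      rcases eq_or_ne d b with rfl | hdb
      · rw [m₁.2, m₂.2]; exact hb'
      · rw [m₁.2, m₂.2]; exact hx d hdb (fun e => hcd e.symm)
    funext x
    rcases eq_or_ne x b with rfl | hxb
    · exact hb'
    rcases eq_or_ne x c with rfl | hxc
    · exact hc'
    exact hx x hxb hxc
  refine key.trans ?_
  rw [Finset.card_univ, Fintype.card_fun, Fintype.card_fin]
  apply le_of_eq
  congr 1
  rw [Fintype.card_subtype]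
  have : Finset.univ.filter (fun x : α => x ≠ b ∧ x ≠ c) = Finset.univ \ {b, c} := by
    ext x; simp [not_or]
  rw [this, Finset.card_sdiff_of_subset (Finset.subset_univ _), Finset.card_univ,
    Finset.card_insert_of_notMem (by simpa using hcb.symm), Finset.card_singleton]



/-- If each vertex of `H'` is assigned an independent uniformly random index in `[t]`,
then the probability that a given vertex `w ∈ L'` with `N(w) ≠ ∅` is dangerous with
respect to the induced partition of `H'` is at most `|N(w)|³ / t²`. -/
theorem statement12 (t : ℕ) (ht : 0 < t)
    (V : Type) [Fintype V] [DecidableEq V] (G' : SimpleGraph V) [DecidableRel G'.Adj]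
    (H' L' : Finset V)
    (hdisj : Disjoint H' L') (hunion : H' ∪ L' = Finset.univ)
    (hL' : ∀ x ∈ L', G'.neighborFinset x ⊆ H')
    (w : V) (hw : w ∈ L') (hnb : (G'.neighborFinset w).Nonempty) :
    ((Finset.univ.filter (fun h : H' → Fin t =>
        Dangerous G' L' (part H' h) w)).card : ℝ) / (t : ℝ) ^ H'.card
      ≤ ((G'.degree w : ℝ)) ^ 3 / (t : ℝ) ^ 2 := by
  classical
  have hS : G'.neighborFinset w ⊆ H' := hL' w hw
  obtain ⟨u₀, hu₀⟩ := hnb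
  have ht' : (0 : ℝ) < t := by exact_mod_cast ht
  set a₀ : ↥H' := ⟨u₀, hS hu₀⟩ with ha₀
  set D := Finset.univ.filter (fun h : H' → Fin t => Dangerous G' L' (part H' h) w)
    with hDdef
  have hwitness : ∀ h : H' → Fin t, Dangerous G' L' (part H' h) w →
      ∃ p : ↥H' × ↥H' × ↥H',
        ((p.1 : V) ∈ G'.neighborFinset w ∧ (p.2.1 : V) ∈ G'.neighborFinset w ∧
          (p.2.2 : V) ∈ G'.neighborFinset w ∧ p.1 ≠ a₀ ∧ p.2.1 ≠ p.2.2 ∧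
          p.2.1 ≠ a₀ ∧ p.2.1 ≠ p.1) ∧ (h a₀ = h p.1 ∧ h p.2.1 = h p.2.2) := by
    intro h hd
    obtain ⟨i, u', hu', hu₀i, -, -, u'', hu'', j, hu''j, hcardj⟩ := hd u₀ hu₀
    rw [Finset.mem_sdiff, Finset.mem_inter, Finset.mem_singleton] at hu'
    obtain ⟨⟨hu'S, hu'p⟩, hu'ne⟩ := hu'
    rw [Finset.mem_sdiff, Finset.mem_union, Finset.mem_insert, Finset.mem_singleton] at hu''
    obtain ⟨hu''S, hu''n⟩ := hu''
    push_neg at hu''n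
    obtain ⟨-, hne0, hne1⟩ := hu''n
    obtain ⟨u''', hu'''mem, hu'''ne⟩ :=
      Finset.exists_mem_ne
        (by omega : 1 < (part H' h j ∩ G'.neighborFinset w).card) u''
    rw [Finset.mem_inter] at hu'''mem
    obtain ⟨hu'''p, hu'''S⟩ := hu'''mem
    rw [mem_part] at hu₀i hu'p hu''j hu'''p
    obtain ⟨hu₀H, hv₀⟩ := hu₀i
    obtain ⟨hu'H, hv'⟩ := hu'p
    obtain ⟨hu''H, hv''⟩ := hu''j
    obtain ⟨hu'''H, hv'''⟩ := hu'''p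
    refine ⟨(⟨u', hu'H⟩, ⟨u'', hu''H⟩, ⟨u''', hu'''H⟩),
      ⟨hu'S, hu''S, hu'''S, ?_, ?_, ?_, ?_⟩, ?_, ?_⟩
    · exact fun e => hu'ne (congrArg Subtype.val e)
    · exact fun e => hu'''ne (congrArg Subtype.val e).symm
    · exact fun e => hne0 (congrArg Subtype.val e)
    · exact fun e => hne1 (congrArg Subtype.val e)
    · exact hv₀.trans hv'.symm
    · exact hv''.trans hv'''.symm
  rcases Finset.eq_empty_or_nonempty D with hDe | ⟨h₀, hh₀⟩
  · rw [hDe]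
    simp only [Finset.card_empty, Nat.cast_zero, zero_div]
    positivity
  have hh₀d : Dangerous G' L' (part H' h₀) w := (Finset.mem_filter.mp hh₀).2
  obtain ⟨p₀, hp₀, -⟩ := hwitness h₀ hh₀d
  have hn2 : 2 ≤ H'.card :=
    Finset.one_lt_card.mpr ⟨↑p₀.1, p₀.1.2, ↑a₀, a₀.2, Subtype.coe_ne_coe.mpr hp₀.2.2.2.1⟩
  set T : Finset (↥H' × ↥H' × ↥H') := Finset.univ.filter (fun p =>
    (p.1 : V) ∈ G'.neighborFinset w ∧ (p.2.1 : V) ∈ G'.neighborFinset w ∧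
    (p.2.2 : V) ∈ G'.neighborFinset w ∧ p.1 ≠ a₀ ∧ p.2.1 ≠ p.2.2 ∧
    p.2.1 ≠ a₀ ∧ p.2.1 ≠ p.1) with hTdef
  have hsub : D ⊆ T.biUnion (fun p => Finset.univ.filter
      (fun h : H' → Fin t => h a₀ = h p.1 ∧ h p.2.1 = h p.2.2)) := by
    intro h hh
    obtain ⟨p, hpT, hpE⟩ := hwitness h (Finset.mem_filter.mp hh).2
    exact Finset.mem_biUnion.mpr ⟨p, Finset.mem_filter.mpr ⟨Finset.mem_univ _, hpT⟩,
      Finset.mem_filter.mpr ⟨Finset.mem_univ _, hpE⟩⟩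
  have hDcard : D.card ≤ T.card * t ^ (H'.card - 2) := by
    refine (Finset.card_le_card hsub).trans Finset.card_biUnion_le |>.trans ?_
    have := Finset.sum_le_card_nsmul T
      (fun p => (Finset.univ.filter
        (fun h : H' → Fin t => h a₀ = h p.1 ∧ h p.2.1 = h p.2.2)).card)
      (t ^ (H'.card - 2)) ?_
    · simpa [smul_eq_mul] using this
    · intro p hp
      rw [hTdef, Finset.mem_filter] at hp
      have := count_pair_le t a₀ p.1 p.2.1 p.2.2 (Ne.symm hp.2.2.2.2.1)
        hp.2.2.2.2.2.1 hp.2.2.2.2.2.2.1 hp.2.2.2.2.2.2.2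
      simpa [Fintype.card_coe] using this
  have hT : T.card ≤ (G'.neighborFinset w).card ^ 3 := by
    have h1 : T.card ≤ (G'.neighborFinset w ×ˢ G'.neighborFinset w ×ˢ
        G'.neighborFinset w).card := by
      apply Finset.card_le_card_of_injOn
        (fun p : ↥H' × ↥H' × ↥H' => ((p.1 : V), (p.2.1 : V), (p.2.2 : V)))
      · intro p hp
        rw [hTdef, Finset.mem_coe, Finset.mem_filter] at hp
        exact Finset.mem_product.mpr ⟨hp.2.1,
          Finset.mem_product.mpr ⟨hp.2.2.1, hp.2.2.2.1⟩⟩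
      · intro p _ q _ he
        rw [Prod.ext_iff, Prod.ext_iff] at he
        exact Prod.ext (Subtype.ext he.1)
          (Prod.ext (Subtype.ext he.2.1) (Subtype.ext he.2.2))
    refine h1.trans_eq ?_
    rw [Finset.card_product, Finset.card_product]
    ring
  have hfin : D.card * t ^ 2 ≤ (G'.neighborFinset w).card ^ 3 * t ^ H'.card := by
    calc D.card * t ^ 2 ≤ (T.card * t ^ (H'.card - 2)) * t ^ 2 :=
          Nat.mul_le_mul_right _ hDcard
      _ = T.card * t ^ H'.card := by
          rw [mul_assoc, ← pow_add, Nat.sub_add_cancel hn2]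
      _ ≤ (G'.neighborFinset w).card ^ 3 * t ^ H'.card :=
          Nat.mul_le_mul_right _ hT
  rw [div_le_div_iff₀ (by positivity) (by positivity)]
  have hdg : (G'.degree w : ℝ) = ((G'.neighborFinset w).card : ℝ) := by
    rw [SimpleGraph.card_neighborFinset_eq_degree]
  rw [hdg]
  exact_mod_cast hfin
end
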